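/- arXiv:1712.02160 — 2 statements merged into one kernel-verified Lean document; each statement's English description precedes it below -/
import Mathlib

section
/- Let n ≥ 3, let Ω ⊆ ℝⁿ be a bounded measurable set, let y ∈ ℝⁿ, and let g : Ω → ℝ be measurable. Suppose there is a constant C₀ > 0 such that ∫_{Ω \ closure(B(y,r))} |g(x)|^{2n/(n−2)} dx ≤ C₀ r^{−n} for every r > 0. Then there exists a constant C = C(n, C₀) such that the distribution function of g satisfies |{x ∈ Ω : |g(x)| > t}| ≤ C t^{−n/(n−2)} for every t > 0. -/
open MeasureTheory Metric Set

/-- If `∫_{Ω \ closure(B(y,r))} |g|^{2n/(n−2)} ≤ C₀ r^{−n}` for all `r > 0`,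
then the distribution function of `g` satisfies `|{|g| > t}| ≤ C t^{−n/(n−2)}`. -/
theorem distribution_bound_of_annular_integral_bound
    (n : ℕ) (hn : 3 ≤ n) (Ω : Set (EuclideanSpace ℝ (Fin n)))
    (hΩmeas : MeasurableSet Ω) (hΩbdd : Bornology.IsBounded Ω)
    (y : EuclideanSpace ℝ (Fin n)) (g : EuclideanSpace ℝ (Fin n) → ℝ)
    (hg : Measurable g) (C₀ : ℝ) (hC₀ : 0 < C₀)
    (hbound : ∀ r : ℝ, 0 < r →
      ∫⁻ x in Ω \ closedBall y r, ENNReal.ofReal (|g x| ^ ((2 * n : ℝ) / ((n : ℝ) - 2))) ≤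
        ENNReal.ofReal (C₀ * r ^ (-(n : ℝ)))) :
    ∃ C : ℝ, 0 < C ∧ ∀ t : ℝ, 0 < t →
      volume {x ∈ Ω | t < |g x|} ≤
        ENNReal.ofReal (C * t ^ (-((n : ℝ) / ((n : ℝ) - 2)))) := by
  set p : ℝ := (2 * n : ℝ) / ((n : ℝ) - 2) with hp
  have hn3 : (3 : ℝ) ≤ (n : ℝ) := by exact_mod_cast hn
  have hn2 : (0 : ℝ) < (n : ℝ) - 2 := by linarith
  have hnpos : (0 : ℝ) < (n : ℝ) := by linarith
  have hnne : (n : ℝ) ≠ 0 := ne_of_gt hnpos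
  have hppos : 0 < p := div_pos (by positivity) hn2
  set c : ℝ := (volume (ball (0 : EuclideanSpace ℝ (Fin n)) 1)).toReal with hc
  have hc0 : 0 ≤ c := ENNReal.toReal_nonneg
  refine ⟨c + C₀, by linarith, ?_⟩
  intro t ht
  have hexp : -(((n : ℝ)) / ((n : ℝ) - 2)) = -(p / 2) := by
    rw [hp]; field_simp
  rw [hexp]
  set r : ℝ := t ^ (-(p / (2 * n))) with hr
  have hrpos : 0 < r := Real.rpow_pos_of_pos ht _
  have hrn : r ^ (n : ℕ) = t ^ (-(p / 2)) := by
    rw [hr, ← Real.rpow_natCast (t ^ (-(p / (2 * n)))) n, ← Real.rpow_mul ht.le]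
    congr 1
    field_simp
  have hrnneg : r ^ (-(n : ℝ)) = t ^ (p / 2) := by
    rw [hr, ← Real.rpow_mul ht.le]
    congr 1
    field_simp
  -- split the set
  have hsub : {x ∈ Ω | t < |g x|} ⊆
      closedBall y r ∪ {x ∈ Ω \ closedBall y r | t < |g x|} := by
    intro x hx
    by_cases hxb : x ∈ closedBall y r
    · exact Or.inl hxb
    · exact Or.inr ⟨⟨hx.1, hxb⟩, hx.2⟩
  have hball : volume (closedBall y r) = ENNReal.ofReal (c * t ^ (-(p / 2))) := by
    rw [Measure.addHaar_closedBall _ _ hrpos.le]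
    have hfr : Module.finrank ℝ (EuclideanSpace ℝ (Fin n)) = n := by
      simp [finrank_euclideanSpace]
    rw [hfr, hrn]
    rw [ENNReal.ofReal_mul hc0, hc,
      ENNReal.ofReal_toReal (measure_ball_lt_top (x := (0 : EuclideanSpace ℝ (Fin n))) (r := 1)).ne,
      mul_comm]
  -- Chebyshev on the outer part
  have hcheb : volume {x ∈ Ω \ closedBall y r | t < |g x|} ≤
      ENNReal.ofReal (C₀ * t ^ (-(p / 2))) := by
    set S := Ω \ closedBall y r with hS
    have hSmeas : MeasurableSet S := hΩmeas.diff measurableSet_closedBall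
    have hmeas : Measurable fun x => ENNReal.ofReal (|g x| ^ p) := by fun_prop
    have hmono : volume {x ∈ S | t < |g x|} ≤
        (volume.restrict S) {x | ENNReal.ofReal (t ^ p) ≤ ENNReal.ofReal (|g x| ^ p)} := by
      rw [Measure.restrict_apply₀ (by
        exact (measurableSet_le measurable_const hmeas).nullMeasurableSet)]
      apply measure_mono
      intro x hx
      refine ⟨?_, hx.1⟩
      have h1 : t ^ p ≤ |g x| ^ p :=
        Real.rpow_le_rpow ht.le hx.2.le hppos.le
      exact ENNReal.ofReal_le_ofReal h1
    have hcheb' : ENNReal.ofReal (t ^ p) *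
        (volume.restrict S) {x | ENNReal.ofReal (t ^ p) ≤ ENNReal.ofReal (|g x| ^ p)} ≤
        ∫⁻ x in S, ENNReal.ofReal (|g x| ^ p) :=
      mul_meas_ge_le_lintegral₀ hmeas.aemeasurable _
    have hint := hbound r hrpos
    have htp : (0 : ℝ) < t ^ p := Real.rpow_pos_of_pos ht _
    have key : ENNReal.ofReal (t ^ p) * volume {x ∈ S | t < |g x|} ≤
        ENNReal.ofReal (C₀ * r ^ (-(n : ℝ))) :=
      le_trans (mul_le_mul_right hmono _) (hcheb'.trans hint)
    have key' : volume {x ∈ S | t < |g x|} * ENNReal.ofReal (t ^ p) ≤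
        ENNReal.ofReal (C₀ * r ^ (-(n : ℝ))) := by rw [mul_comm]; exact key
    have := (ENNReal.le_div_iff_mul_le (Or.inl (ENNReal.ofReal_pos.2 htp).ne')
      (Or.inl ENNReal.ofReal_ne_top)).2 key'
    refine this.trans ?_
    rw [← ENNReal.ofReal_div_of_pos htp]
    apply ENNReal.ofReal_le_ofReal
    rw [hrnneg]
    have : C₀ * t ^ (p / 2) / t ^ p = C₀ * t ^ (-(p / 2)) := by
      rw [mul_div_assoc, ← Real.rpow_sub ht]
      congr 1
      ring_nf
    linarith [this.le, this.ge]
  calc volume {x ∈ Ω | t < |g x|}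
      ≤ volume (closedBall y r) + volume {x ∈ Ω \ closedBall y r | t < |g x|} :=
        (measure_mono hsub).trans (measure_union_le _ _)
    _ ≤ ENNReal.ofReal (c * t ^ (-(p / 2))) + ENNReal.ofReal (C₀ * t ^ (-(p / 2))) := by
        rw [hball]; exact add_le_add_right hcheb _
    _ = ENNReal.ofReal ((c + C₀) * t ^ (-(p / 2))) := by
        rw [← ENNReal.ofReal_add (by positivity) (by positivity)]
        ring_nf
end

section
/- Let n ≥ 3, let Ω ⊆ ℝⁿ be a bounded measurable set, let y ∈ ℝⁿ, and let h : Ω → ℝ be measurable. Suppose there is a constant C₀ > 0 such that ∫_{Ω \ closure(B(y,r))} |h(x)|² dx ≤ C₀ r^{−n} for every r > 0. Then there exists a constant C = C(n, C₀) such that the distribution function of h satisfies |{x ∈ Ω : |h(x)| > t}| ≤ C t^{−1} for every t > 0. -/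
open MeasureTheory Metric Set

/-- If `∫_{Ω \ closure(B(y,r))} |h|² ≤ C₀ r^{−n}` for all `r > 0`, then the
distribution function of `h` satisfies `|{|h| > t}| ≤ C t^{−1}`. -/
theorem distribution_bound_of_annular_L2_bound
    (n : ℕ) (hn : 3 ≤ n) (Ω : Set (EuclideanSpace ℝ (Fin n)))
    (hΩmeas : MeasurableSet Ω) (hΩbdd : Bornology.IsBounded Ω)
    (y : EuclideanSpace ℝ (Fin n)) (h : EuclideanSpace ℝ (Fin n) → ℝ)
    (hh : Measurable h) (C₀ : ℝ) (hC₀ : 0 < C₀)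
    (hbound : ∀ r : ℝ, 0 < r →
      ∫⁻ x in Ω \ closedBall y r, ENNReal.ofReal (|h x| ^ 2) ≤
        ENNReal.ofReal (C₀ * r ^ (-(n : ℝ)))) :
    ∃ C : ℝ, 0 < C ∧ ∀ t : ℝ, 0 < t →
      volume {x ∈ Ω | t < |h x|} ≤ ENNReal.ofReal (C * t⁻¹) := by
  set V : ℝ := (volume (closedBall (0 : EuclideanSpace ℝ (Fin n)) 1)).toReal with hV
  have hVnn : 0 ≤ V := ENNReal.toReal_nonneg
  refine ⟨V + C₀, by linarith, ?_⟩
  intro t ht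
  have hn0 : (n : ℝ) ≠ 0 := by
    have : (3:ℝ) ≤ (n:ℝ) := by exact_mod_cast hn
    linarith
  set r : ℝ := t ^ ((-1 : ℝ) / n) with hr
  have hrpos : 0 < r := Real.rpow_pos_of_pos ht _
  have hrn : r ^ (n : ℕ) = t⁻¹ := by
    rw [hr, ← Real.rpow_natCast (t ^ ((-1 : ℝ) / n)) n, ← Real.rpow_mul ht.le,
      div_mul_cancel₀ _ hn0, Real.rpow_neg_one]
  have hrneg : r ^ (-(n : ℝ)) = t := by
    rw [hr, ← Real.rpow_mul ht.le]
    have : (-1 : ℝ) / n * (-(n : ℝ)) = 1 := by field_simp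
    rw [this, Real.rpow_one]
  set A : Set (EuclideanSpace ℝ (Fin n)) := {x ∈ Ω | t < |h x|} with hA
  have hAmeas : MeasurableSet A :=
    hΩmeas.inter (measurableSet_lt measurable_const hh.abs)
  set S : Set (EuclideanSpace ℝ (Fin n)) := A \ closedBall y r with hSdef
  have hSmeas : MeasurableSet S := hAmeas.diff measurableSet_closedBall
  have hSsub : S ⊆ Ω \ closedBall y r :=
    diff_subset_diff_left (sep_subset _ _)
  -- Chebyshev on S
  have cheb : ENNReal.ofReal (t ^ 2) * volume S ≤ ENNReal.ofReal (C₀ * t) := by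
    calc ENNReal.ofReal (t ^ 2) * volume S
        = ∫⁻ _ in S, ENNReal.ofReal (t ^ 2) := by
          rw [setLIntegral_const, mul_comm]
      _ ≤ ∫⁻ x in S, ENNReal.ofReal (|h x| ^ 2) := by
          refine setLIntegral_mono' hSmeas ?_
          intro x hx
          have hx' : t < |h x| := hx.1.2
          exact ENNReal.ofReal_le_ofReal (by nlinarith [abs_nonneg (h x)])
      _ ≤ ∫⁻ x in Ω \ closedBall y r, ENNReal.ofReal (|h x| ^ 2) :=
          lintegral_mono_set hSsub
      _ ≤ ENNReal.ofReal (C₀ * r ^ (-(n : ℝ))) := hbound r hrpos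
      _ = ENNReal.ofReal (C₀ * t) := by rw [hrneg]
  have ht2 : (0 : ℝ) < t ^ 2 := by positivity
  have hS_le : volume S ≤ ENNReal.ofReal (C₀ * t⁻¹) := by
    have hdiv : volume S ≤ ENNReal.ofReal (C₀ * t) / ENNReal.ofReal (t ^ 2) := by
      rw [ENNReal.le_div_iff_mul_le (Or.inl (by simp [ht2.ne', ht2, ht.ne'])) (Or.inl ENNReal.ofReal_ne_top)]
      rw [mul_comm]
      exact cheb
    refine hdiv.trans_eq ?_
    rw [← ENNReal.ofReal_div_of_pos ht2]
    congr 1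
    field_simp
  -- ball volume
  have hball : volume (closedBall y r) = ENNReal.ofReal (V * t⁻¹) := by
    rw [Measure.addHaar_closedBall _ _ hrpos.le]
    have hfr : Module.finrank ℝ (EuclideanSpace ℝ (Fin n)) = n := by simp
    rw [hfr, hrn, ← Measure.addHaar_unitClosedBall_eq_addHaar_unitBall, hV,
      ← ENNReal.ofReal_toReal (measure_closedBall_lt_top (x := (0 : EuclideanSpace ℝ (Fin n))) (r := 1)).ne,
      ← ENNReal.ofReal_mul (by positivity)]
    rw [mul_comm, ENNReal.toReal_ofReal ENNReal.toReal_nonneg]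
  calc volume A = volume (A ∩ closedBall y r ∪ S) := by
        rw [hSdef, inter_union_diff]
    _ ≤ volume (A ∩ closedBall y r) + volume S := measure_union_le _ _
    _ ≤ volume (closedBall y r) + volume S :=
        add_le_add_left (measure_mono inter_subset_right) _
    _ ≤ ENNReal.ofReal (V * t⁻¹) + ENNReal.ofReal (C₀ * t⁻¹) := by
        rw [hball]; exact add_le_add_right hS_le _
    _ = ENNReal.ofReal ((V + C₀) * t⁻¹) := by
        rw [← ENNReal.ofReal_add (by positivity) (by positivity)]
        ring_nf
end
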